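/- Two tame persistence vector spaces over a field κ are isomorphic if and only if their bar codes are equal, i.e., if V ≅ ⊕_{k∈K} I[a_k, b_k] and W ≅ ⊕_{l∈L} I[a'_l, b'_l] are decompositions into finitely many interval persistence modules, then V and W are isomorphic as persistence vector spaces if and only if the finite multiset of intervals {[a_k, b_k] : k ∈ K} equals the finite multiset {[a'_l, b'_l] : l ∈ L}. -/

import Mathlib

open scoped Classical

/-- A persistence vector space over a field `κ`: a family of `κ`-vector spaces `V n`
(`n ∈ ℕ`) together with linear structure maps `φ n : V n → V (n+1)`. -/
structure PersistenceVS (κ : Type) [Field κ] : Type 1 where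
  V : ℕ → Type
  instAdd : ∀ n, AddCommGroup (V n)
  instMod : ∀ n, Module κ (V n)
  φ : ∀ n, V n →ₗ[κ] V (n + 1)

attribute [instance] PersistenceVS.instAdd PersistenceVS.instMod

/-- A morphism of persistence vector spaces: a family of linear maps commuting with
the structure maps. -/
structure PersistenceHom {κ : Type} [Field κ] (U W : PersistenceVS κ) where
  ω : ∀ n, U.V n →ₗ[κ] W.V n
  comm : ∀ n, (W.φ n).comp (ω n) = (ω (n + 1)).comp (U.φ n)

/-- Two persistence vector spaces are isomorphic iff there is a morphism all of whose
components are bijective. -/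
def PersistenceVS.Isomorphic {κ : Type} [Field κ] (U W : PersistenceVS κ) : Prop :=
  ∃ f : PersistenceHom U W, ∀ n, Function.Bijective (f.ω n)

/-- A persistence vector space is tame iff each component is finite dimensional and
the structure maps are isomorphisms for all sufficiently large `n`. -/
def PersistenceVS.Tame {κ : Type} [Field κ] (V : PersistenceVS κ) : Prop :=
  (∀ n, FiniteDimensional κ (V.V n)) ∧ ∃ N, ∀ n, N ≤ n → Function.Bijective (V.φ n)

/-- The `n`-th component of the interval persistence module `I[a,b]`, realized as the
submodule `⊤` of `κ` when `a ≤ n ≤ b` and `⊥` otherwise. -/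
noncomputable def intervalSub (κ : Type) [Field κ] (a : ℕ) (b : ℕ∞) (n : ℕ) :
    Submodule κ κ :=
  if a ≤ n ∧ (n : ℕ∞) ≤ b then ⊤ else ⊥

/-- The interval persistence module `I[a,b]`: component `κ` for `a ≤ n ≤ b` and `0`
otherwise, with structure maps the identity when `a ≤ n < b` and zero otherwise. -/
noncomputable def intervalModule (κ : Type) [Field κ] (a : ℕ) (b : ℕ∞) :
    PersistenceVS κ where
  V n := ↥(intervalSub κ a b n)
  instAdd _ := inferInstance
  instMod _ := inferInstance
  φ n :=
    if h : intervalSub κ a b n ≤ intervalSub κ a b (n + 1) then Submodule.inclusion h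
    else 0

/-- Direct sum (over a finite index type) of persistence vector spaces. -/
def directSumPVS {κ : Type} [Field κ] {ι : Type} [Fintype ι]
    (Vs : ι → PersistenceVS κ) : PersistenceVS κ where
  V n := ∀ k, (Vs k).V n
  instAdd _ := inferInstance
  instMod _ := inferInstance
  φ n := LinearMap.pi fun k => ((Vs k).φ n).comp (LinearMap.proj k)

/-- The composite structure map `φ_{i,j} : V i → V j` for `i ≤ j` (identity if `i = j`). -/
noncomputable def PersistenceVS.phiLE {κ : Type} [Field κ] (V : PersistenceVS κ)
    {i j : ℕ} (h : i ≤ j) : V.V i →ₗ[κ] V.V j :=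
  Nat.leRecOn h (fun {k} g => (V.φ k).comp g) LinearMap.id

section AuxLemmas

variable {κ : Type} [Field κ]

noncomputable def lrank {A B : Type} [AddCommGroup A] [Module κ A]
    [AddCommGroup B] [Module κ B] (f : A →ₗ[κ] B) : ℕ :=
  Module.finrank κ (LinearMap.range f)

theorem phiLE_self (V : PersistenceVS κ) {i : ℕ} (h : i ≤ i) :
    V.phiLE h = LinearMap.id := Nat.leRecOn_self _

theorem phiLE_succ (V : PersistenceVS κ) {i j : ℕ} (h : i ≤ j) (h2 : i ≤ j + 1) :
    V.phiLE h2 = (V.φ j).comp (V.phiLE h) := Nat.leRecOn_succ h _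

theorem hom_phiLE_comm {U W : PersistenceVS κ} (f : PersistenceHom U W)
    {i j : ℕ} (h : i ≤ j) :
    (f.ω j).comp (U.phiLE h) = (W.phiLE h).comp (f.ω i) := by
  induction j, h using Nat.le_induction with
  | base => rw [phiLE_self, phiLE_self]; ext x; rfl
  | succ j hij ih =>
    rw [phiLE_succ U hij, phiLE_succ W hij]
    ext x
    have h1 := LinearMap.congr_fun (f.comm j) (U.phiLE hij x)
    have h2 := LinearMap.congr_fun ih x
    simp only [LinearMap.comp_apply] at h1 h2 ⊢
    rw [← h1, h2]

theorem lrank_comp_inj {A B C : Type} [AddCommGroup A] [Module κ A]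
    [AddCommGroup B] [Module κ B] [AddCommGroup C] [Module κ C]
    (g : B →ₗ[κ] C) (f : A →ₗ[κ] B) (hg : Function.Injective g) :
    lrank (g.comp f) = lrank f := by
  unfold lrank
  rw [LinearMap.range_comp]
  exact (LinearEquiv.finrank_eq (Submodule.equivMapOfInjective g hg _)).symm

theorem lrank_comp_surj {A B C : Type} [AddCommGroup A] [Module κ A]
    [AddCommGroup B] [Module κ B] [AddCommGroup C] [Module κ C]
    (g : B →ₗ[κ] C) (f : A →ₗ[κ] B) (hf : Function.Surjective f) :
    lrank (g.comp f) = lrank g := by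
  unfold lrank
  rw [LinearMap.range_comp, LinearMap.range_eq_top.2 hf, Submodule.map_top]

theorem lrank_phiLE_of_iso {U W : PersistenceVS κ} (h : U.Isomorphic W)
    {i j : ℕ} (hij : i ≤ j) : lrank (U.phiLE hij) = lrank (W.phiLE hij) := by
  obtain ⟨f, hf⟩ := h
  have h1 : lrank ((f.ω j).comp (U.phiLE hij)) = lrank (U.phiLE hij) :=
    lrank_comp_inj _ _ (hf j).1
  have h2 : lrank ((W.phiLE hij).comp (f.ω i)) = lrank (W.phiLE hij) :=
    lrank_comp_surj _ _ (hf i).2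
  rw [← h1, hom_phiLE_comm f hij, h2]

theorem directSum_phiLE {ι : Type} [Fintype ι] (Vs : ι → PersistenceVS κ)
    {i j : ℕ} (h : i ≤ j) :
    (directSumPVS Vs).phiLE h =
      LinearMap.pi fun k => ((Vs k).phiLE h).comp (LinearMap.proj k) := by
  induction j, h using Nat.le_induction with
  | base =>
    rw [phiLE_self]
    ext x
    funext k
    simp only [phiLE_self, LinearMap.id_comp]
    rfl
  | succ j hij ih =>
    rw [phiLE_succ _ hij, ih]
    ext x
    funext k
    simp [directSumPVS, phiLE_succ _ hij, LinearMap.pi_apply]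
    rfl

noncomputable def piSubEquiv {ι : Type} {M : ι → Type} [∀ i, AddCommGroup (M i)]
    [∀ i, Module κ (M i)] (p : ∀ i, Submodule κ (M i)) :
    ↥(Submodule.pi Set.univ p) ≃ₗ[κ] ∀ i, ↥(p i) where
  toFun x i := ⟨x.1 i, x.2 i (Set.mem_univ i)⟩
  invFun x := ⟨fun i => (x i).1, fun i _ => (x i).2⟩
  left_inv x := rfl
  right_inv x := rfl
  map_add' x y := rfl
  map_smul' c x := rfl

theorem range_pi_comp_proj {ι : Type} [Fintype ι] {M N : ι → Type}
    [∀ i, AddCommGroup (M i)] [∀ i, Module κ (M i)]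
    [∀ i, AddCommGroup (N i)] [∀ i, Module κ (N i)]
    (f : ∀ i, M i →ₗ[κ] N i) :
    LinearMap.range (LinearMap.pi fun k => (f k).comp (LinearMap.proj k)) =
      Submodule.pi Set.univ fun k => LinearMap.range (f k) := by
  ext x
  simp only [LinearMap.mem_range, Submodule.mem_pi, Set.mem_univ, forall_true_left]
  constructor
  · rintro ⟨y, rfl⟩ i
    exact ⟨y i, rfl⟩
  · intro hx
    choose y hy using hx
    exact ⟨y, funext fun i => by simp [LinearMap.pi_apply, hy i]⟩

theorem lrank_pi {ι : Type} [Fintype ι] {M N : ι → Type}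
    [∀ i, AddCommGroup (M i)] [∀ i, Module κ (M i)]
    [∀ i, AddCommGroup (N i)] [∀ i, Module κ (N i)]
    [∀ i, Module.Finite κ (N i)]
    (f : ∀ i, M i →ₗ[κ] N i) :
    lrank (LinearMap.pi fun k => (f k).comp (LinearMap.proj k)) = ∑ i, lrank (f i) := by
  unfold lrank
  rw [range_pi_comp_proj, LinearEquiv.finrank_eq (piSubEquiv _),
    Module.finrank_pi_fintype]

theorem intervalSub_top {a : ℕ} {b : ℕ∞} {n : ℕ} (h1 : a ≤ n) (h2 : (n : ℕ∞) ≤ b) :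
    intervalSub κ a b n = ⊤ := if_pos ⟨h1, h2⟩

theorem intervalSub_bot {a : ℕ} {b : ℕ∞} {n : ℕ} (h : ¬(a ≤ n ∧ (n : ℕ∞) ≤ b)) :
    intervalSub κ a b n = ⊥ := if_neg h

theorem finrank_intervalV_top {a : ℕ} {b : ℕ∞} {n : ℕ} (h1 : a ≤ n)
    (h2 : (n : ℕ∞) ≤ b) : Module.finrank κ ((intervalModule κ a b).V n) = 1 := by
  show Module.finrank κ ↥(intervalSub κ a b n) = 1
  rw [intervalSub_top h1 h2, finrank_top, Module.finrank_self]

theorem finrank_intervalV_bot {a : ℕ} {b : ℕ∞} {n : ℕ}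
    (h : ¬(a ≤ n ∧ (n : ℕ∞) ≤ b)) :
    Module.finrank κ ((intervalModule κ a b).V n) = 0 := by
  show Module.finrank κ ↥(intervalSub κ a b n) = 0
  rw [intervalSub_bot h, finrank_bot]

theorem interval_phi_surj (a : ℕ) (b : ℕ∞) {n : ℕ}
    (h1 : a ≤ n) (h1' : (n : ℕ∞) ≤ b)
    (h2 : a ≤ n + 1) (h2' : ((n + 1 : ℕ) : ℕ∞) ≤ b) :
    Function.Surjective ((intervalModule κ a b).φ n) := by
  have e1 : intervalSub κ a b n = ⊤ := intervalSub_top h1 h1'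
  have e2 : intervalSub κ a b (n + 1) = ⊤ := intervalSub_top h2 h2'
  have hle : intervalSub κ a b n ≤ intervalSub κ a b (n + 1) := by rw [e1, e2]
  have hphi : (intervalModule κ a b).φ n = Submodule.inclusion hle := dif_pos hle
  rw [hphi]
  rintro ⟨y, hy⟩
  exact ⟨⟨y, by rw [e1]; trivial⟩, rfl⟩

theorem interval_phiLE_surj (a : ℕ) (b : ℕ∞) {i j : ℕ} (h : i ≤ j)
    (hai : a ≤ i) (hjb : (j : ℕ∞) ≤ b) :
    Function.Surjective ((intervalModule κ a b).phiLE h) := by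
  induction j, h using Nat.le_induction with
  | base => rw [phiLE_self]; exact fun x => ⟨x, rfl⟩
  | succ j hij ih =>
    have hjb' : (j : ℕ∞) ≤ b := le_trans (by exact_mod_cast Nat.cast_le.2 (Nat.le_succ j)) hjb
    rw [phiLE_succ _ hij, LinearMap.coe_comp]
    exact Function.Surjective.comp
      (interval_phi_surj a b (le_trans hai hij) hjb' (le_trans hai (Nat.le_succ_of_le hij)) hjb)
      (ih hjb')

instance intervalFin (a : ℕ) (b : ℕ∞) (n : ℕ) :
    Module.Finite κ ((intervalModule κ a b).V n) :=
  inferInstanceAs (Module.Finite κ ↥(intervalSub κ a b n))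

theorem lrank_interval (a : ℕ) (b : ℕ∞) {i j : ℕ} (h : i ≤ j) :
    lrank ((intervalModule κ a b).phiLE h) =
      if a ≤ i ∧ (j : ℕ∞) ≤ b then 1 else 0 := by
  by_cases hc : a ≤ i ∧ (j : ℕ∞) ≤ b
  · rw [if_pos hc]
    unfold lrank
    rw [LinearMap.range_eq_top.2 (interval_phiLE_surj a b h hc.1 hc.2), finrank_top]
    exact finrank_intervalV_top (le_trans hc.1 h) hc.2
  · rw [if_neg hc]
    by_cases hai : a ≤ i
    · have hjb : ¬((j : ℕ∞) ≤ b) := fun hj => hc ⟨hai, hj⟩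
      have : Module.finrank κ ((intervalModule κ a b).V j) = 0 :=
        finrank_intervalV_bot (fun hj => hjb hj.2)
      have hle := Submodule.finrank_le (LinearMap.range ((intervalModule κ a b).phiLE h))
      unfold lrank
      omega
    · have : Module.finrank κ ((intervalModule κ a b).V i) = 0 :=
        finrank_intervalV_bot (fun hj => hai hj.1)
      have hle := LinearMap.finrank_range_le ((intervalModule κ a b).phiLE h)
      unfold lrank
      omega

theorem PersistenceVS.Isomorphic.symm {U W : PersistenceVS κ} (h : U.Isomorphic W) :
    W.Isomorphic U := by
  obtain ⟨f, hf⟩ := h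
  let e : ∀ n, U.V n ≃ₗ[κ] W.V n := fun n => LinearEquiv.ofBijective (f.ω n) (hf n)
  refine ⟨⟨fun n => (e n).symm.toLinearMap, fun n => ?_⟩, fun n => (e n).symm.bijective⟩
  ext x
  apply (e (n + 1)).injective
  have h1 := LinearMap.congr_fun (f.comm n) ((e n).symm x)
  simp only [LinearMap.comp_apply, LinearEquiv.coe_coe] at h1 ⊢
  have e1 : ∀ m y, e m y = f.ω m y := fun m y => rfl
  rw [LinearEquiv.apply_symm_apply, e1, ← h1, ← e1 n _, LinearEquiv.apply_symm_apply]

theorem PersistenceVS.Isomorphic.trans {U W X : PersistenceVS κ} (h1 : U.Isomorphic W)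
    (h2 : W.Isomorphic X) : U.Isomorphic X := by
  obtain ⟨f, hf⟩ := h1
  obtain ⟨g, hg⟩ := h2
  refine ⟨⟨fun n => (g.ω n).comp (f.ω n), fun n => ?_⟩, fun n => (hg n).comp (hf n)⟩
  ext x
  have hg1 := LinearMap.congr_fun (g.comm n) (f.ω n x)
  have hf1 := LinearMap.congr_fun (f.comm n) x
  simp only [LinearMap.comp_apply] at hg1 hf1 ⊢
  rw [hg1, hf1]

theorem directSum_reindex {ι ι' : Type} [Fintype ι] [Fintype ι'] (σ : ι ≃ ι')
    (Ws : ι' → PersistenceVS κ) :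
    (directSumPVS Ws).Isomorphic (directSumPVS fun k => Ws (σ k)) := by
  refine ⟨⟨fun n => LinearMap.pi fun k => LinearMap.proj (σ k), fun n => rfl⟩,
    fun n => ?_⟩
  exact (Equiv.piCongrLeft' (fun l => (Ws l).V n) σ.symm).bijective

theorem card_filter_split {α : Type*} (M : Multiset α) (P Q R : α → Prop)
    [DecidablePred P] [DecidablePred Q] [DecidablePred R]
    (h1 : ∀ x, P x ↔ (Q x ∨ R x)) (h2 : ∀ x, ¬(Q x ∧ R x)) :
    (M.filter P).card = (M.filter Q).card + (M.filter R).card := by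
  have e0 : M.filter P = M.filter fun a => Q a ∨ R a :=
    Multiset.filter_congr fun x _ => h1 x
  have e1 : M.filter Q + M.filter R
      = M.filter (fun a => Q a ∨ R a) + M.filter fun a => Q a ∧ R a :=
    Multiset.filter_add_filter Q R M
  have e2 : M.filter (fun a => Q a ∧ R a) = 0 :=
    Multiset.filter_eq_nil.2 fun a _ => h2 a
  rw [e2, add_zero] at e1
  rw [e0, ← e1, Multiset.card_add]

theorem exists_bound (M : Multiset (ℕ × ℕ∞)) :
    ∃ J : ℕ, ∀ x ∈ M, x.2 ≠ ⊤ → x.2 < (J : ℕ∞) := by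
  induction M using Multiset.induction with
  | empty => exact ⟨0, fun x hx => absurd hx (Multiset.notMem_zero x)⟩
  | cons y M ih =>
    obtain ⟨J, hJ⟩ := ih
    by_cases hy : y.2 = ⊤
    · exact ⟨J, fun x hx hx2 => by
        rcases Multiset.mem_cons.1 hx with rfl | hx
        · exact absurd hy hx2
        · exact hJ x hx hx2⟩
    · set m := ENat.toNat y.2 with hmdef
      have hm : (m : ℕ∞) = y.2 := ENat.coe_toNat hy
      refine ⟨max J (m + 1), fun x hx hx2 => ?_⟩
      rcases Multiset.mem_cons.1 hx with rfl | hx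
      · rw [← hm]
        exact_mod_cast (by omega : m < max J (m + 1))
      · refine lt_of_lt_of_le (hJ x hx hx2) ?_
        exact_mod_cast le_max_left J (m + 1)

theorem barcode_ext (S T : Multiset (ℕ × ℕ∞))
    (hS : ∀ x ∈ S, (x.1 : ℕ∞) ≤ x.2) (hT : ∀ x ∈ T, (x.1 : ℕ∞) ≤ x.2)
    (h : ∀ i j : ℕ, i ≤ j →
      (S.filter fun x => x.1 ≤ i ∧ (j : ℕ∞) ≤ x.2).card =
      (T.filter fun x => x.1 ≤ i ∧ (j : ℕ∞) ≤ x.2).card) :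
    S = T := by
  have hG : ∀ p j : ℕ, p ≤ j →
      (S.filter fun x => x.1 = p ∧ (j : ℕ∞) ≤ x.2).card =
      (T.filter fun x => x.1 = p ∧ (j : ℕ∞) ≤ x.2).card := by
    intro p j hpj
    cases p with
    | zero =>
      have e : ∀ M : Multiset (ℕ × ℕ∞),
          (M.filter fun x => x.1 = 0 ∧ (j : ℕ∞) ≤ x.2) =
          (M.filter fun x => x.1 ≤ 0 ∧ (j : ℕ∞) ≤ x.2) := fun M =>
        Multiset.filter_congr fun x _ => by rw [Nat.le_zero]
      rw [e S, e T]
      exact h 0 j hpj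
    | succ q =>
      have split : ∀ M : Multiset (ℕ × ℕ∞),
          (M.filter fun x => x.1 ≤ q + 1 ∧ (j : ℕ∞) ≤ x.2).card =
          (M.filter fun x => x.1 = q + 1 ∧ (j : ℕ∞) ≤ x.2).card +
          (M.filter fun x => x.1 ≤ q ∧ (j : ℕ∞) ≤ x.2).card := fun M => by
        apply card_filter_split
        · intro x
          constructor
          · rintro ⟨hx1, hx2⟩
            rcases Nat.le_add_one_iff.1 hx1 with h' | h'
            · exact Or.inr ⟨h', hx2⟩
            · exact Or.inl ⟨h', hx2⟩
          · rintro (⟨hx1, hx2⟩ | ⟨hx1, hx2⟩)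
            · exact ⟨le_of_eq hx1, hx2⟩
            · exact ⟨le_trans hx1 (Nat.le_succ q), hx2⟩
        · intro x
          rintro ⟨⟨h1, _⟩, ⟨h2, _⟩⟩
          omega
      have h1 := h (q + 1) j hpj
      have h2 := h q j (le_trans (Nat.le_succ q) hpj)
      rw [split S, split T] at h1
      omega
  refine Multiset.ext.2 fun x => ?_
  obtain ⟨p, q⟩ := x
  rw [Multiset.count_eq_card_filter_eq, Multiset.count_eq_card_filter_eq]
  cases q with
  | top =>
    obtain ⟨J0, hJ⟩ := exists_bound (S + T)
    set J := max J0 p with hJdef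
    have key : ∀ M : Multiset (ℕ × ℕ∞), (∀ x ∈ M, x ∈ S + T) →
        (M.filter fun x => (p, (⊤ : ℕ∞)) = x) =
        (M.filter fun x => x.1 = p ∧ (J : ℕ∞) ≤ x.2) := by
      intro M hM
      refine Multiset.filter_congr fun x hx => ?_
      constructor
      · rintro rfl; exact ⟨rfl, le_top⟩
      · rintro ⟨h1, h2⟩
        by_cases ht : x.2 = ⊤
        · rw [Prod.ext_iff]; exact ⟨h1.symm, ht.symm⟩
        · exact absurd h2 (not_le.2 (lt_of_lt_of_le (hJ x (hM x hx) ht)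
            (by exact_mod_cast le_max_left J0 p)))
    rw [key S (fun x hx => Multiset.mem_add.2 (Or.inl hx)),
      key T (fun x hx => Multiset.mem_add.2 (Or.inr hx))]
    exact hG p J (le_max_right J0 p)
  | coe m =>
    by_cases hpm : p ≤ m
    · have split : ∀ M : Multiset (ℕ × ℕ∞),
          (M.filter fun x => x.1 = p ∧ ((m : ℕ) : ℕ∞) ≤ x.2).card =
          (M.filter fun x => ((p, ((m : ℕ) : ℕ∞)) : ℕ × ℕ∞) = x).card +
          (M.filter fun x => x.1 = p ∧ ((m + 1 : ℕ) : ℕ∞) ≤ x.2).card := fun M => by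
        apply card_filter_split
        · intro x
          constructor
          · rintro ⟨hx1, hx2⟩
            rcases eq_or_lt_of_le hx2 with h' | h'
            · exact Or.inl (Prod.ext hx1.symm h')
            · refine Or.inr ⟨hx1, ?_⟩
              have := (ENat.add_one_le_iff (by exact_mod_cast (WithTop.coe_ne_top)
                  : ((m : ℕ) : ℕ∞) ≠ ⊤)).2 h'
              exact_mod_cast this
          · rintro (h' | ⟨hx1, hx2⟩)
            · rw [← h']; exact ⟨rfl, le_refl _⟩
            · refine ⟨hx1, le_trans ?_ hx2⟩
              exact_mod_cast Nat.le_succ m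
        · intro x
          rintro ⟨h', ⟨_, hx2⟩⟩
          rw [← h'] at hx2
          simp only at hx2
          have : (m : ℕ) + 1 ≤ m := by exact_mod_cast hx2
          omega
      have e1 := hG p m hpm
      have e2 := hG p (m + 1) (le_trans hpm (Nat.le_succ m))
      rw [split S, split T] at e1
      omega
    · have z : ∀ M : Multiset (ℕ × ℕ∞), (∀ x ∈ M, (x.1 : ℕ∞) ≤ x.2) →
          (M.filter fun x => ((p, ((m : ℕ) : ℕ∞)) : ℕ × ℕ∞) = x) = 0 := by
        intro M hM
        refine Multiset.filter_eq_nil.2 fun x hx hc => ?_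
        rw [← hc] at hx
        have := hM _ hx
        simp only at this
        exact hpm (by exact_mod_cast this)
      rw [z S hS, z T hT]

theorem lrank_directSum_interval {K : Type} [Fintype K]
    (a : K → ℕ) (b : K → ℕ∞) {i j : ℕ} (h : i ≤ j) :
    lrank ((directSumPVS fun k : K => intervalModule κ (a k) (b k)).phiLE h) =
      ((Finset.univ.val.map fun k : K => (a k, b k)).filter
        fun x => x.1 ≤ i ∧ (j : ℕ∞) ≤ x.2).card := by
  rw [directSum_phiLE]
  refine (lrank_pi (fun k => (intervalModule κ (a k) (b k)).phiLE h)).trans ?_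
  rw [Multiset.filter_map, Multiset.card_map]
  have e1 : ∀ k : K, lrank ((intervalModule κ (a k) (b k)).phiLE h) =
      if a k ≤ i ∧ (j : ℕ∞) ≤ b k then 1 else 0 := fun k => lrank_interval _ _ h
  rw [Finset.sum_congr rfl fun k _ => e1 k]
  rw [← Finset.card_filter]
  rw [← Finset.filter_val, Finset.card_val]
  rfl

end AuxLemmas

/-- Two tame persistence vector spaces, given with decompositions into
finitely many interval modules, are isomorphic iff their bar codes (the finite
multisets of intervals, recorded as pairs in `ℕ × ℕ∞`) are equal. -/
theorem stmt12 {κ K L : Type} [Field κ] [Fintype K] [Fintype L]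
    (a : K → ℕ) (b : K → ℕ∞) (a' : L → ℕ) (b' : L → ℕ∞)
    (hab : ∀ k, (a k : ℕ∞) ≤ b k) (hab' : ∀ l, (a' l : ℕ∞) ≤ b' l)
    (V W : PersistenceVS κ)
    (hV : V.Isomorphic (directSumPVS fun k : K => intervalModule κ (a k) (b k)))
    (hW : W.Isomorphic (directSumPVS fun l : L => intervalModule κ (a' l) (b' l))) :
    V.Isomorphic W ↔
      (Finset.univ.val.map fun k : K => (a k, b k)) =
        (Finset.univ.val.map fun l : L => (a' l, b' l)) := by
  constructor
  · intro hVW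
    have hDS : (directSumPVS fun k : K => intervalModule κ (a k) (b k)).Isomorphic
        (directSumPVS fun l : L => intervalModule κ (a' l) (b' l)) :=
      (hV.symm.trans hVW).trans hW
    refine barcode_ext _ _ ?_ ?_ ?_
    · intro x hx
      obtain ⟨k, _, rfl⟩ := Multiset.mem_map.1 hx
      exact hab k
    · intro x hx
      obtain ⟨l, _, rfl⟩ := Multiset.mem_map.1 hx
      exact hab' l
    · intro i j hij
      have := lrank_phiLE_of_iso hDS hij
      rw [lrank_directSum_interval a b hij, lrank_directSum_interval a' b' hij] at this
      exact this
  · intro hbc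
    -- build a bijection matching the intervals
    have hcard : ∀ c : ℕ × ℕ∞,
        Fintype.card {k : K // (a k, b k) = c} = Fintype.card {l : L // (a' l, b' l) = c} := by
      intro c
      have hcount := congrArg (Multiset.count c) hbc
      rw [Multiset.count_map, Multiset.count_map] at hcount
      have e : ∀ {ι : Type} [Fintype ι] (f : ι → ℕ × ℕ∞),
          (Finset.univ.val.filter fun k => c = f k).card =
            Fintype.card {k : ι // f k = c} := by
        intro ι _ f
        rw [Fintype.card_subtype]
        rw [← Finset.filter_val, Finset.card_val]
        congr 1
        exact Finset.filter_congr fun x _ => by simp [eq_comm]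
      rw [e (fun k : K => (a k, b k)), e (fun l : L => (a' l, b' l))] at hcount
      exact hcount
    have efib : ∀ c : ℕ × ℕ∞,
        {k : K // (fun k => (a k, b k)) k = c} ≃ {l : L // (fun l => (a' l, b' l)) l = c} :=
      fun c => Fintype.equivOfCardEq (hcard c)
    let σ : K ≃ L := Equiv.ofFiberEquiv efib
    have hσ : ∀ k, (a' (σ k), b' (σ k)) = (a k, b k) := fun k =>
      Equiv.ofFiberEquiv_map efib k
    have hfun : (fun k : K => intervalModule κ (a k) (b k)) =
        fun k : K => intervalModule κ (a' (σ k)) (b' (σ k)) := by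
      funext k
      have h1 : a' (σ k) = a k := congrArg Prod.fst (hσ k)
      have h2 : b' (σ k) = b k := congrArg Prod.snd (hσ k)
      rw [h1, h2]
    rw [hfun] at hV
    exact (hV.trans (directSum_reindex σ fun l => intervalModule κ (a' l) (b' l)).symm).trans
      hW.symm
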